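/- For every x₀ ∈ ℝ^{n+m−1}, the sublevel set 𝖫 = {x ∈ ℝ^{n+m−1} : f(x) ≤ f(x₀)} of the reduced dual objective f(x) = η Σ_{i=1}^n Σ_{j=1}^m exp((α_i + β_j − M_{ij})/η) − α^T a − (β_{−m})^T b_{−m} (where x = (α, β_{−m}) and β_m = 0) is a convex and compact subset of ℝ^{n+m−1}. -/

import Mathlib

open Finset

private lemma stmt12_two_mul_le_exp (x : ℝ) : 2 * x ≤ Real.exp x := by
  rcases le_total x 1 with h | h
  · nlinarith [Real.add_one_le_exp x]
  · have h1 : Real.exp x = Real.exp 1 * Real.exp (x - 1) := by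
      rw [← Real.exp_add]; ring_nf
    nlinarith [Real.add_one_le_exp (x - 1), Real.exp_one_gt_d9, Real.exp_pos (x - 1)]

private lemma stmt12_exp_term_lb {η : ℝ} (hη : 0 < η) {u v : ℝ} (huv : u ≤ v) :
    2 * max u 0 ≤ η * Real.exp (v / η) := by
  rcases le_total u 0 with h | h
  · rw [max_eq_right h, mul_zero]; positivity
  · rw [max_eq_left h]
    have h1 := stmt12_two_mul_le_exp (v / η)
    calc 2 * u ≤ 2 * v := by linarith
      _ = η * (2 * (v / η)) := by field_simp
      _ ≤ η * Real.exp (v / η) := mul_le_mul_of_nonneg_left h1 hη.le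

set_option maxHeartbeats 1000000 in
/-- Every sublevel set of the reduced dual objective is convex and
compact (the paper's `m` equals our `m+1`; the domain `ℝ^{n+m−1}` is
`EuclideanSpace ℝ (Fin n ⊕ Fin m)`). -/
theorem stmt12 (n m : ℕ) (hn : 1 ≤ n) (hm : 1 ≤ m)
    (M : Matrix (Fin n) (Fin (m + 1)) ℝ) (η : ℝ) (hη : 0 < η)
    (a : Fin n → ℝ) (b : Fin (m + 1) → ℝ)
    (ha : ∀ i, 0 < a i) (hb : ∀ j, 0 < b j)
    (hsa : ∑ i, a i = 1) (hsb : ∑ j, b j = 1)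
    (f : EuclideanSpace ℝ (Fin n ⊕ Fin m) → ℝ)
    (hf : ∀ x : EuclideanSpace ℝ (Fin n ⊕ Fin m),
      f x = η * ∑ i, ∑ j, Real.exp
          ((x (Sum.inl i) + Fin.snoc (α := fun _ => ℝ) (fun j' : Fin m => x (Sum.inr j')) 0 j
            - M i j) / η)
        - ∑ i, x (Sum.inl i) * a i
        - ∑ j : Fin m, x (Sum.inr j) * b (Fin.castSucc j))
    (x₀ : EuclideanSpace ℝ (Fin n ⊕ Fin m)) :
    Convex ℝ {x : EuclideanSpace ℝ (Fin n ⊕ Fin m) | f x ≤ f x₀} ∧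
    IsCompact {x : EuclideanSpace ℝ (Fin n ⊕ Fin m) | f x ≤ f x₀} := by
  haveI hne_n : Nonempty (Fin n) := ⟨⟨0, hn⟩⟩
  haveI hne_m : Nonempty (Fin m) := ⟨⟨0, hm⟩⟩
  set c := f x₀ with hc
  have ha1 : ∀ i, a i ≤ 1 := by
    intro i; rw [← hsa]
    exact Finset.single_le_sum (fun i _ => (ha i).le) (Finset.mem_univ i)
  have hb1 : ∀ j, b j ≤ 1 := by
    intro j; rw [← hsb]
    exact Finset.single_le_sum (fun j _ => (hb j).le) (Finset.mem_univ j)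
  obtain ⟨bL, hbLdef⟩ : ∃ X, X = b (Fin.last m) := ⟨_, rfl⟩
  have hsb' : ∑ j : Fin m, b j.castSucc = 1 - bL := by
    have h := hsb
    rw [Fin.sum_univ_castSucc] at h
    linarith
  have h1bL : 0 < 1 - bL := by
    rw [← hsb']
    exact Finset.sum_pos (fun j _ => hb _) Finset.univ_nonempty
  have hbL : 0 < bL := by rw [hbLdef]; exact hb _
  -- normal (snoc-free) form of `f`
  obtain ⟨S, hS⟩ : ∃ X : EuclideanSpace ℝ (Fin n ⊕ Fin m) → ℝ, X = fun x => ∑ i,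
      ((∑ j : Fin m, Real.exp ((x (Sum.inl i) + x (Sum.inr j) - M i j.castSucc) / η))
        + Real.exp ((x (Sum.inl i) - M i (Fin.last m)) / η)) := ⟨_, rfl⟩
  obtain ⟨L1, hL1⟩ : ∃ X : EuclideanSpace ℝ (Fin n ⊕ Fin m) → ℝ, X = fun x => ∑ i, x (Sum.inl i) * a i := ⟨_, rfl⟩
  obtain ⟨L2, hL2⟩ : ∃ X : EuclideanSpace ℝ (Fin n ⊕ Fin m) → ℝ, X = fun x => ∑ j : Fin m, x (Sum.inr j) * b j.castSucc := ⟨_, rfl⟩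
  have hf2 : ∀ x, f x = η * S x - L1 x - L2 x := by
    intro x
    rw [hf x]
    simp only [hS, hL1, hL2]
    have hinner : ∀ i : Fin n,
        (∑ j : Fin (m+1), Real.exp ((x (Sum.inl i)
            + Fin.snoc (α := fun _ => ℝ) (fun j' : Fin m => x (Sum.inr j')) 0 j - M i j) / η))
          = (∑ j : Fin m, Real.exp ((x (Sum.inl i) + x (Sum.inr j) - M i j.castSucc) / η))
            + Real.exp ((x (Sum.inl i) - M i (Fin.last m)) / η) := by
      intro i
      rw [Fin.sum_univ_castSucc]
      simp [Fin.snoc_castSucc, Fin.snoc_last]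
    rw [Finset.sum_congr rfl (fun i _ => hinner i)]
  -- convexity
  have hconv : Convex ℝ {x | f x ≤ c} := by
    intro x hx y hy p q hp hq hpq
    simp only [Set.mem_setOf_eq] at hx hy ⊢
    have hco : ∀ k, (p • x + q • y) k = p * x k + q * y k := fun _ => rfl
    have hexp : ∀ A B : ℝ, Real.exp (p * A + q * B) ≤ p * Real.exp A + q * Real.exp B := by
      intro A B
      have h := convexOn_exp.2 (Set.mem_univ A) (Set.mem_univ B) hp hq hpq
      simpa using h
    have hSle : S (p • x + q • y) ≤ p * S x + q * S y := by
      simp only [hS]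
      calc ∑ i, ((∑ j : Fin m, Real.exp (((p • x + q • y) (Sum.inl i)
              + (p • x + q • y) (Sum.inr j) - M i j.castSucc) / η))
            + Real.exp (((p • x + q • y) (Sum.inl i) - M i (Fin.last m)) / η))
          ≤ ∑ i, (p * ((∑ j : Fin m, Real.exp ((x (Sum.inl i) + x (Sum.inr j) - M i j.castSucc) / η))
                + Real.exp ((x (Sum.inl i) - M i (Fin.last m)) / η))
              + q * ((∑ j : Fin m, Real.exp ((y (Sum.inl i) + y (Sum.inr j) - M i j.castSucc) / η))
                + Real.exp ((y (Sum.inl i) - M i (Fin.last m)) / η))) := by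
            apply Finset.sum_le_sum
            intro i _
            have hlast : Real.exp (((p • x + q • y) (Sum.inl i) - M i (Fin.last m)) / η)
                ≤ p * Real.exp ((x (Sum.inl i) - M i (Fin.last m)) / η)
                  + q * Real.exp ((y (Sum.inl i) - M i (Fin.last m)) / η) := by
              have harg : ((p • x + q • y) (Sum.inl i) - M i (Fin.last m)) / η
                  = p * ((x (Sum.inl i) - M i (Fin.last m)) / η)
                    + q * ((y (Sum.inl i) - M i (Fin.last m)) / η) := by
                rw [hco]
                have hq1 : q = 1 - p := by linarith
                subst hq1
                field_simp
                ring
              rw [harg]; exact hexp _ _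
            have hmid : ∀ j : Fin m, Real.exp (((p • x + q • y) (Sum.inl i)
                  + (p • x + q • y) (Sum.inr j) - M i j.castSucc) / η)
                ≤ p * Real.exp ((x (Sum.inl i) + x (Sum.inr j) - M i j.castSucc) / η)
                  + q * Real.exp ((y (Sum.inl i) + y (Sum.inr j) - M i j.castSucc) / η) := by
              intro j
              have harg : ((p • x + q • y) (Sum.inl i) + (p • x + q • y) (Sum.inr j)
                    - M i j.castSucc) / η
                  = p * ((x (Sum.inl i) + x (Sum.inr j) - M i j.castSucc) / η)
                    + q * ((y (Sum.inl i) + y (Sum.inr j) - M i j.castSucc) / η) := by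
                rw [hco, hco]
                have hq1 : q = 1 - p := by linarith
                subst hq1
                field_simp
                ring
              rw [harg]; exact hexp _ _
            calc (∑ j : Fin m, Real.exp (((p • x + q • y) (Sum.inl i)
                  + (p • x + q • y) (Sum.inr j) - M i j.castSucc) / η))
                + Real.exp (((p • x + q • y) (Sum.inl i) - M i (Fin.last m)) / η)
                ≤ (∑ j : Fin m, (p * Real.exp ((x (Sum.inl i) + x (Sum.inr j) - M i j.castSucc) / η)
                    + q * Real.exp ((y (Sum.inl i) + y (Sum.inr j) - M i j.castSucc) / η)))
                  + (p * Real.exp ((x (Sum.inl i) - M i (Fin.last m)) / η)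
                    + q * Real.exp ((y (Sum.inl i) - M i (Fin.last m)) / η)) :=
                  add_le_add (Finset.sum_le_sum fun j _ => hmid j) hlast
              _ = p * ((∑ j : Fin m, Real.exp ((x (Sum.inl i) + x (Sum.inr j) - M i j.castSucc) / η))
                    + Real.exp ((x (Sum.inl i) - M i (Fin.last m)) / η))
                  + q * ((∑ j : Fin m, Real.exp ((y (Sum.inl i) + y (Sum.inr j) - M i j.castSucc) / η))
                    + Real.exp ((y (Sum.inl i) - M i (Fin.last m)) / η)) := by
                  rw [Finset.sum_add_distrib, ← Finset.mul_sum, ← Finset.mul_sum]; ring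
        _ = p * (∑ i, ((∑ j : Fin m, Real.exp ((x (Sum.inl i) + x (Sum.inr j) - M i j.castSucc) / η))
                + Real.exp ((x (Sum.inl i) - M i (Fin.last m)) / η)))
            + q * (∑ i, ((∑ j : Fin m, Real.exp ((y (Sum.inl i) + y (Sum.inr j) - M i j.castSucc) / η))
                + Real.exp ((y (Sum.inl i) - M i (Fin.last m)) / η))) := by
            rw [Finset.sum_add_distrib, ← Finset.mul_sum, ← Finset.mul_sum]
    have hL1eq : L1 (p • x + q • y) = p * L1 x + q * L1 y := by
      simp only [hL1]
      rw [Finset.mul_sum, Finset.mul_sum, ← Finset.sum_add_distrib]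
      exact Finset.sum_congr rfl fun i _ => by rw [hco]; ring
    have hL2eq : L2 (p • x + q • y) = p * L2 x + q * L2 y := by
      simp only [hL2]
      rw [Finset.mul_sum, Finset.mul_sum, ← Finset.sum_add_distrib]
      exact Finset.sum_congr rfl fun j _ => by rw [hco]; ring
    have hmul : η * S (p • x + q • y) ≤ η * (p * S x + q * S y) :=
      mul_le_mul_of_nonneg_left hSle hη.le
    have hkey : f (p • x + q • y) ≤ p * f x + q * f y := by
      rw [hf2, hf2, hf2, hL1eq, hL2eq]
      linarith only [hmul]
    calc f (p • x + q • y) ≤ p * f x + q * f y := hkey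
      _ ≤ p * c + q * c :=
        add_le_add (mul_le_mul_of_nonneg_left hx hp) (mul_le_mul_of_nonneg_left hy hq)
      _ = c := by rw [← add_mul, hpq, one_mul]
  -- continuity
  have hcont : Continuous f := by
    have hfe : f = fun x => η * S x - L1 x - L2 x := funext hf2
    rw [hfe]
    simp only [hS, hL1, hL2]
    apply Continuous.sub
    apply Continuous.sub
    · apply Continuous.mul continuous_const
      apply continuous_finset_sum
      intro i _
      apply Continuous.add
      · apply continuous_finset_sum
        intro j _
        exact ((((PiLp.continuous_apply 2 (fun _ : Fin n ⊕ Fin m => ℝ) (Sum.inl i)).add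
          (PiLp.continuous_apply 2 (fun _ : Fin n ⊕ Fin m => ℝ) (Sum.inr j))).sub continuous_const).div_const η).rexp
      · exact (((PiLp.continuous_apply 2 (fun _ : Fin n ⊕ Fin m => ℝ) (Sum.inl i)).sub continuous_const).div_const η).rexp
    · exact continuous_finset_sum _ fun i _ => (PiLp.continuous_apply 2 _ _).mul continuous_const
    · exact continuous_finset_sum _ fun j _ => (PiLp.continuous_apply 2 _ _).mul continuous_const
  -- constants for the boundedness argument
  obtain ⟨K, hK⟩ : ∃ K : ℝ, ∀ i j, M i j ≤ K := by
    refine ⟨Finset.univ.sup' Finset.univ_nonempty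
      (fun i => Finset.univ.sup' Finset.univ_nonempty (M i)), fun i j => ?_⟩
    exact le_trans (Finset.le_sup' (M i) (Finset.mem_univ j))
      (Finset.le_sup' (f := fun i => Finset.univ.sup' Finset.univ_nonempty (M i))
        (Finset.mem_univ i))
  obtain ⟨A, hA⟩ : ∃ X, X = (c + (2 - bL) * K) / (1 - bL) := ⟨_, rfl⟩
  obtain ⟨T, hT⟩ : ∃ X, X = (2 - bL) * (c + K) / bL := ⟨_, rfl⟩
  obtain ⟨A', hA'⟩ : ∃ X, X = max A 0 := ⟨_, rfl⟩
  obtain ⟨T', hT'⟩ : ∃ X, X = max T 0 := ⟨_, rfl⟩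
  obtain ⟨S0, hS0def⟩ : ∃ X, X = max (c + T' + A') 0 := ⟨_, rfl⟩
  have hA'0 : 0 ≤ A' := by rw [hA']; exact le_max_right _ _
  have hT'0 : 0 ≤ T' := by rw [hT']; exact le_max_right _ _
  have hS0nn : 0 ≤ S0 := by rw [hS0def]; exact le_max_right _ _
  obtain ⟨amin, hamin⟩ : ∃ X, X = Finset.univ.inf' Finset.univ_nonempty a := ⟨_, rfl⟩
  have hamin_pos : 0 < amin := by rw [hamin]; exact (Finset.lt_inf'_iff _).2 fun i _ => ha i
  have hamin_le : ∀ i, amin ≤ a i := by rw [hamin]; exact fun i => Finset.inf'_le a (Finset.mem_univ i)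
  obtain ⟨bmin, hbmin⟩ : ∃ X, X = Finset.univ.inf' Finset.univ_nonempty b := ⟨_, rfl⟩
  have hbmin_pos : 0 < bmin := by rw [hbmin]; exact (Finset.lt_inf'_iff _).2 fun j _ => hb j
  have hbmin_le : ∀ j, bmin ≤ b j := by rw [hbmin]; exact fun j => Finset.inf'_le b (Finset.mem_univ j)
  obtain ⟨R₀, hR₀⟩ : ∃ X, X = max (max A' (S0 / amin)) (max T' (S0 / bmin)) := ⟨_, rfl⟩
  -- all coordinates of points in the sublevel set are bounded by R₀
  have hcoord : ∀ x : EuclideanSpace ℝ (Fin n ⊕ Fin m), f x ≤ c → ∀ k, |x k| ≤ R₀ := by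
    intro x hx k
    obtain ⟨α, hα⟩ : ∃ X : Fin n → ℝ, X = fun i => x (Sum.inl i) := ⟨_, rfl⟩
    obtain ⟨B, hB⟩ : ∃ X : Fin (m+1) → ℝ, X = Fin.snoc (fun j' : Fin m => x (Sum.inr j')) 0 := ⟨_, rfl⟩
    obtain ⟨αs, hαs⟩ : ∃ X, X = Finset.univ.sup' Finset.univ_nonempty α := ⟨_, rfl⟩
    obtain ⟨t, htdef⟩ : ∃ X, X = Finset.univ.sup' Finset.univ_nonempty B := ⟨_, rfl⟩
    have hαle : ∀ i, α i ≤ αs := by rw [hαs]; exact fun i => Finset.le_sup' α (Finset.mem_univ i)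
    have hBle : ∀ j, B j ≤ t := by rw [htdef]; exact fun j => Finset.le_sup' B (Finset.mem_univ j)
    have ht0 : 0 ≤ t := by
      have hlast : B (Fin.last m) = 0 := by simp only [hB]; exact Fin.snoc_last _ _
      calc (0:ℝ) = B (Fin.last m) := hlast.symm
        _ ≤ t := hBle _
    obtain ⟨is, -, his⟩ := Finset.exists_mem_eq_sup' (Finset.univ_nonempty) α
    obtain ⟨js, -, hjs⟩ := Finset.exists_mem_eq_sup' (Finset.univ_nonempty) B
    obtain ⟨P, hP⟩ : ∃ X : Fin n → ℝ, X = fun i => max (α i + t - K) 0 := ⟨_, rfl⟩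
    obtain ⟨Q, hQ⟩ : ∃ X : Fin (m+1) → ℝ, X = fun j => max (αs + B j - K) 0 := ⟨_, rfl⟩
    have hPnn : ∀ i, 0 ≤ P i := by rw [hP]; exact fun i => le_max_right _ _
    have hQnn : ∀ j, 0 ≤ Q j := by rw [hQ]; exact fun j => le_max_right _ _
    obtain ⟨e, he⟩ : ∃ X : Fin n → Fin (m+1) → ℝ, X = fun i j => Real.exp ((α i + B j - M i j) / η) := ⟨_, rfl⟩
    have he_pos : ∀ i j, 0 ≤ η * e i j := by
      intro i j; simp only [he]; positivity
    have hfx : f x = η * (∑ i, ∑ j, e i j) - (∑ i, α i * a i)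
        - (∑ j : Fin m, B j.castSucc * b j.castSucc) := by
      simp only [he, hα, hB, Fin.snoc_castSucc]
      exact hf x
    -- key lower bounds on exponential terms
    have h_e1 : ∀ i, 2 * P i ≤ η * e i js := by
      intro i
      simp only [hP, he]
      exact stmt12_exp_term_lb hη (by rw [htdef, hjs]; linarith [hK i js])
    have h_e2 : ∀ j, 2 * Q j ≤ η * e is j := by
      intro j
      simp only [hQ, he]
      exact stmt12_exp_term_lb hη (by rw [hαs, his]; linarith [hK is j])
    have hEb : 2 * (∑ i, P i) + 2 * (∑ j ∈ Finset.univ.erase js, Q j)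
        ≤ η * ∑ i, ∑ j, e i j := by
      have h0 : η * ∑ i, ∑ j : Fin (m+1), e i j = ∑ j : Fin (m+1), ∑ i, (η * e i j) := by
        simp only [Finset.mul_sum]
        exact Finset.sum_comm
      rw [h0, ← Finset.add_sum_erase _ (fun j => ∑ i, (η * e i j)) (Finset.mem_univ js)]
      apply add_le_add
      · rw [Finset.mul_sum]
        exact Finset.sum_le_sum fun i _ => h_e1 i
      · rw [Finset.mul_sum]
        apply Finset.sum_le_sum
        intro j _
        exact le_trans (h_e2 j)
          (Finset.single_le_sum (fun i _ => he_pos i j) (Finset.mem_univ is))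
    -- bounds on the linear parts
    have hL1b : ∑ i, α i * a i ≤ (∑ i, P i) + (K - t) := by
      calc ∑ i, α i * a i ≤ ∑ i, (P i + (K - t)) * a i := by
            apply Finset.sum_le_sum
            intro i _
            apply mul_le_mul_of_nonneg_right _ (ha i).le
            have h := le_max_left (α i + t - K) 0
            simp only [hP]; linarith
        _ = (∑ i, P i * a i) + (K - t) := by
            simp only [add_mul]
            rw [Finset.sum_add_distrib, ← Finset.mul_sum, hsa, mul_one]
        _ ≤ (∑ i, P i) + (K - t) := by
            refine add_le_add ?_ le_rfl
            exact Finset.sum_le_sum fun i _ => mul_le_of_le_one_right (hPnn i) (ha1 i)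
    have hL2b : ∑ j : Fin m, B j.castSucc * b j.castSucc
        ≤ ((∑ i, P i) + (∑ j ∈ Finset.univ.erase js, Q j)) + (K - αs) * (1 - bL) := by
      have hQjs : Q js ≤ ∑ i, P i := by
        have h1 : Q js = P is := by
          simp only [hP, hQ]
          rw [hαs, htdef, his, hjs]
        rw [h1]
        exact Finset.single_le_sum (fun i _ => hPnn i) (Finset.mem_univ is)
      calc ∑ j : Fin m, B j.castSucc * b j.castSucc
          ≤ ∑ j : Fin m, (Q j.castSucc + (K - αs)) * b j.castSucc := by
            apply Finset.sum_le_sum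
            intro j _
            apply mul_le_mul_of_nonneg_right _ (hb _).le
            have h := le_max_left (αs + B j.castSucc - K) 0
            simp only [hQ]; linarith
        _ = (∑ j : Fin m, Q j.castSucc * b j.castSucc) + (K - αs) * (1 - bL) := by
            simp only [add_mul]
            rw [Finset.sum_add_distrib, ← Finset.mul_sum, hsb']
        _ ≤ (∑ j : Fin m, Q j.castSucc) + (K - αs) * (1 - bL) := by
            refine add_le_add ?_ le_rfl
            exact Finset.sum_le_sum fun j _ => mul_le_of_le_one_right (hQnn _) (hb1 _)
        _ ≤ (∑ j : Fin (m+1), Q j) + (K - αs) * (1 - bL) := by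
            refine add_le_add ?_ le_rfl
            rw [Fin.sum_univ_castSucc (f := Q)]
            linarith [hQnn (Fin.last m)]
        _ = (Q js + ∑ j ∈ Finset.univ.erase js, Q j) + (K - αs) * (1 - bL) := by
            rw [Finset.add_sum_erase _ Q (Finset.mem_univ js)]
        _ ≤ ((∑ i, P i) + (∑ j ∈ Finset.univ.erase js, Q j)) + (K - αs) * (1 - bL) := by
            linarith
    have hSQnn : 0 ≤ ∑ j ∈ Finset.univ.erase js, Q j :=
      Finset.sum_nonneg fun j _ => hQnn j
    -- key inequality (I)
    have hI : t + (1 - bL) * αs ≤ c + (2 - bL) * K := by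
      linarith only [hx, hfx, hEb, hL1b, hL2b, hSQnn]
    have hαsub : αs ≤ A := by
      rw [hA, le_div_iff₀ h1bL]
      linarith only [ht0, hI]
    -- key inequality (II)
    have hEnn : 0 ≤ η * ∑ i, ∑ j, e i j :=
      mul_nonneg hη.le (Finset.sum_nonneg fun i _ => Finset.sum_nonneg fun j _ => by
        simp only [he]; positivity)
    have hII : -c ≤ (∑ i, α i * a i) + (∑ j : Fin m, B j.castSucc * b j.castSucc) := by
      linarith only [hx, hfx, hEnn]
    have hL1ub : ∑ i, α i * a i ≤ αs := by
      calc ∑ i, α i * a i ≤ ∑ i, αs * a i :=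
            Finset.sum_le_sum fun i _ => mul_le_mul_of_nonneg_right (hαle i) (ha i).le
        _ = αs := by rw [← Finset.mul_sum, hsa, mul_one]
    have hL2ub : ∑ j : Fin m, B j.castSucc * b j.castSucc ≤ t * (1 - bL) := by
      calc ∑ j : Fin m, B j.castSucc * b j.castSucc ≤ ∑ j : Fin m, t * b j.castSucc :=
            Finset.sum_le_sum fun j _ => mul_le_mul_of_nonneg_right (hBle _) (hb _).le
        _ = t * (1 - bL) := by rw [← Finset.mul_sum, hsb']
    have hαslb : -c - t ≤ αs := by
      linarith only [hII, hL1ub, hL2ub, mul_nonneg ht0 hbL.le]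
    have htT : t ≤ T := by
      rw [hT, le_div_iff₀ hbL]
      linarith only [hI, mul_le_mul_of_nonneg_left hαslb h1bL.le]
    have hαA' : αs ≤ A' := by rw [hA']; exact hαsub.trans (le_max_left _ _)
    have htT' : t ≤ T' := by rw [hT']; exact htT.trans (le_max_left _ _)
    have hS0_ge : c + T' + A' ≤ S0 := by rw [hS0def]; exact le_max_left _ _
    -- lower bounds on individual coordinates
    have hαlow : ∀ i, -(S0 / amin) ≤ α i := by
      intro i
      have h1 : ∑ i' ∈ Finset.univ.erase i, α i' * a i' ≤ A' := by
        calc ∑ i' ∈ Finset.univ.erase i, α i' * a i'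
            ≤ ∑ i' ∈ Finset.univ.erase i, A' * a i' :=
              Finset.sum_le_sum fun i' _ =>
                mul_le_mul_of_nonneg_right ((hαle i').trans hαA') (ha i').le
          _ = A' * ∑ i' ∈ Finset.univ.erase i, a i' := by rw [Finset.mul_sum]
          _ ≤ A' * 1 := by
              apply mul_le_mul_of_nonneg_left _ hA'0
              rw [← hsa]
              exact Finset.sum_le_sum_of_subset_of_nonneg (Finset.subset_univ _)
                (fun i' _ _ => (ha i').le)
          _ = A' := mul_one A'
      have hsplit : α i * a i + ∑ i' ∈ Finset.univ.erase i, α i' * a i'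
          = ∑ i', α i' * a i' := Finset.add_sum_erase _ (fun i' => α i' * a i') (Finset.mem_univ i)
      have h3 : -c - T' ≤ ∑ i', α i' * a i' := by
        linarith only [hII, hL2ub, mul_nonneg ht0 hbL.le, htT']
      have h2 : -S0 ≤ α i * a i := by linarith only [h1, h3, hsplit, hS0_ge]
      have h4 : -α i ≤ S0 / a i := by
        rw [le_div_iff₀ (ha i)]
        linarith only [h2]
      have h5 : S0 / a i ≤ S0 / amin :=
        div_le_div_of_nonneg_left hS0nn hamin_pos (hamin_le i)
      linarith only [h4, h5]
    have hβlow : ∀ j : Fin m, -(S0 / bmin) ≤ B j.castSucc := by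
      intro j
      have h1 : ∑ j' ∈ Finset.univ.erase j, B j'.castSucc * b j'.castSucc ≤ T' := by
        calc ∑ j' ∈ Finset.univ.erase j, B j'.castSucc * b j'.castSucc
            ≤ ∑ j' ∈ Finset.univ.erase j, t * b j'.castSucc :=
              Finset.sum_le_sum fun j' _ => mul_le_mul_of_nonneg_right (hBle _) (hb _).le
          _ ≤ ∑ j' : Fin m, t * b j'.castSucc :=
              Finset.sum_le_sum_of_subset_of_nonneg (Finset.subset_univ _)
                (fun j' _ _ => mul_nonneg ht0 (hb _).le)
          _ = t * (1 - bL) := by rw [← Finset.mul_sum, hsb']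
          _ ≤ T' := by linarith only [mul_nonneg ht0 hbL.le, htT']
      have hsplit : B j.castSucc * b j.castSucc
            + ∑ j' ∈ Finset.univ.erase j, B j'.castSucc * b j'.castSucc
          = ∑ j' : Fin m, B j'.castSucc * b j'.castSucc :=
        Finset.add_sum_erase _ (fun j' => B j'.castSucc * b j'.castSucc) (Finset.mem_univ j)
      have h3 : -c - A' ≤ ∑ j' : Fin m, B j'.castSucc * b j'.castSucc := by
        linarith only [hII, hL1ub, hαA']
      have h2 : -S0 ≤ B j.castSucc * b j.castSucc := by linarith only [h1, h3, hsplit, hS0_ge]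
      have h4 : -B j.castSucc ≤ S0 / b j.castSucc := by
        rw [le_div_iff₀ (hb _)]
        linarith only [h2]
      have h5 : S0 / b j.castSucc ≤ S0 / bmin :=
        div_le_div_of_nonneg_left hS0nn hbmin_pos (hbmin_le _)
      linarith only [h4, h5]
    -- conclude the coordinatewise bound
    rcases k with i | j
    · rw [abs_le]
      constructor
      · have h1 : S0 / amin ≤ R₀ := by rw [hR₀]; exact le_trans (le_max_right _ _) (le_max_left _ _)
        have h2 := hαlow i
        simp only [hα] at h2
        linarith only [h1, h2]
      · have h1 : A' ≤ R₀ := by rw [hR₀]; exact le_trans (le_max_left _ _) (le_max_left _ _)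
        have h2 : α i ≤ αs := hαle i
        simp only [hα] at h2
        linarith only [h1, h2, hαA']
    · rw [abs_le]
      have hxB : x (Sum.inr j) = B j.castSucc := by
        simp only [hB, Fin.snoc_castSucc]
      constructor
      · have h1 : S0 / bmin ≤ R₀ := by rw [hR₀]; exact le_trans (le_max_right _ _) (le_max_right _ _)
        have h2 := hβlow j
        rw [hxB]
        linarith only [h1, h2]
      · have h1 : T' ≤ R₀ := by rw [hR₀]; exact le_trans (le_max_left _ _) (le_max_right _ _)
        have h2 : B j.castSucc ≤ t := hBle _
        rw [hxB]
        linarith only [h1, h2, htT']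
  -- compactness
  have hclosed : IsClosed {x : EuclideanSpace ℝ (Fin n ⊕ Fin m) | f x ≤ c} :=
    isClosed_le hcont continuous_const
  have hsubset : {x : EuclideanSpace ℝ (Fin n ⊕ Fin m) | f x ≤ c}
      ⊆ Metric.closedBall 0 (Real.sqrt (∑ _k : Fin n ⊕ Fin m, R₀ ^ 2)) := by
    intro x hx
    rw [Metric.mem_closedBall, dist_zero_right, EuclideanSpace.norm_eq]
    apply Real.sqrt_le_sqrt
    apply Finset.sum_le_sum
    intro k _
    rw [Real.norm_eq_abs]
    exact pow_le_pow_left₀ (abs_nonneg _) (hcoord x hx k) 2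
  exact ⟨hconv, Metric.isCompact_of_isClosed_isBounded hclosed
    (Metric.isBounded_closedBall.subset hsubset)⟩
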